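/- Uniform continuity of the log-potential in the bounded-Lipschitz metric (the claim (23), 'High_tower', in the proof of Theorem 1). Let β ∈ {1,2} and γ ∈ (0,1], with s_* = β(√γ−1)², s^* = β(√γ+1)², and σ_{β,γ} the scaled Marchenko–Pastur law. Fix real numbers a, b, T with s^* < a ≤ b ≤ T. Then for every δ > 0 there exists ε > 0 such that for every z ∈ [a,b] and every Borel probability measure μ on ℝ supported in [0,T] satisfying both (1) the function y ↦ ln|z−y| is μ-integrable, and (2) |∫ h dμ − ∫ h dσ_{β,γ}| ≤ ε for every function h : ℝ → ℝ with sup_y |h(y)| + Lip(h) ≤ 1 (Lip(h) the Lipschitz constant of h), one has ∫ ln|z−y| μ(dy) ≤ ∫ ln(z−t) σ_{β,γ}(dt) + δ. -/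

import Mathlib

open MeasureTheory Filter Real

/-- Density of the scaled Marchenko–Pastur law `σ_{β,γ}`, supported on
`[β(√γ−1)², β(√γ+1)²]`. -/
noncomputable def mpDensity (β γ s : ℝ) : ℝ :=
  if s ∈ Set.Icc (β * (Real.sqrt γ - 1) ^ 2) (β * (Real.sqrt γ + 1) ^ 2) then
    Real.sqrt ((s - β * (Real.sqrt γ - 1) ^ 2) * (β * (Real.sqrt γ + 1) ^ 2 - s)) /
      (β * (2 * Real.pi) * γ * s)
  else 0

/-- The scaled Marchenko–Pastur law `σ_{β,γ}`. -/
noncomputable def mpLaw (β γ : ℝ) : Measure ℝ :=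
  MeasureTheory.volume.withDensity fun s => ENNReal.ofReal (mpDensity β γ s)

/-- `σ_{β,γ}`-a.e. point lies in the support interval. -/
lemma mpLaw_ae_mem (β γ : ℝ) :
    ∀ᵐ y ∂(mpLaw β γ),
      y ∈ Set.Icc (β * (Real.sqrt γ - 1) ^ 2) (β * (Real.sqrt γ + 1) ^ 2) := by
  rw [ae_iff]
  have hset : {y : ℝ | ¬ y ∈ Set.Icc (β * (Real.sqrt γ - 1) ^ 2) (β * (Real.sqrt γ + 1) ^ 2)}
      = (Set.Icc (β * (Real.sqrt γ - 1) ^ 2) (β * (Real.sqrt γ + 1) ^ 2))ᶜ := rfl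
  rw [hset, mpLaw, withDensity_apply _ measurableSet_Icc.compl]
  have hcongr : ∫⁻ y in (Set.Icc (β * (Real.sqrt γ - 1) ^ 2) (β * (Real.sqrt γ + 1) ^ 2))ᶜ,
      ENNReal.ofReal (mpDensity β γ y) ∂volume
      = ∫⁻ _ in (Set.Icc (β * (Real.sqrt γ - 1) ^ 2) (β * (Real.sqrt γ + 1) ^ 2))ᶜ,
        (0 : ENNReal) ∂volume := by
    apply setLIntegral_congr_fun measurableSet_Icc.compl
    intro y hy
    show ENNReal.ofReal (mpDensity β γ y) = 0
    have h0 : mpDensity β γ y = 0 := by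
      simp only [mpDensity]
      rw [if_neg (by simpa using hy)]
    rw [h0]
    simp
  rw [hcongr]
  simp

/-- Log difference bound on `[η, ∞)`. -/
lemma abs_log_sub_log_le {η u v : ℝ} (hη : 0 < η) (hu : η ≤ u) (hv : η ≤ v) :
    |Real.log u - Real.log v| ≤ η⁻¹ * |u - v| := by
  have key : ∀ s t : ℝ, η ≤ s → η ≤ t → s ≤ t →
      Real.log t - Real.log s ≤ η⁻¹ * (t - s) := by
    intro s t hs ht hst
    have hs0 : 0 < s := hη.trans_le hs
    have ht0 : 0 < t := hη.trans_le ht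
    have h1 : Real.log t - Real.log s = Real.log (t / s) := by
      rw [Real.log_div ht0.ne' hs0.ne']
    rw [h1]
    calc Real.log (t / s) ≤ t / s - 1 := Real.log_le_sub_one_of_pos (by positivity)
      _ = (t - s) / s := by field_simp
      _ = s⁻¹ * (t - s) := by rw [div_eq_inv_mul]
      _ ≤ η⁻¹ * (t - s) := mul_le_mul_of_nonneg_right (inv_anti₀ hη hs) (by linarith)
  rcases le_total u v with h | h
  · rw [abs_sub_comm (Real.log u),
      abs_of_nonneg (sub_nonneg.mpr (Real.log_le_log (hη.trans_le hu) h)),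
      abs_sub_comm u, abs_of_nonneg (sub_nonneg.mpr h)]
    exact key u v hu hv h
  · rw [abs_of_nonneg (sub_nonneg.mpr (Real.log_le_log (hη.trans_le hv) h)),
      abs_of_nonneg (sub_nonneg.mpr h)]
    exact key v u hv hu h

set_option maxHeartbeats 1000000 in
/-- **Uniform continuity of the log-potential in the bounded-Lipschitz metric**
(claim (23), "High_tower", in the proof of Theorem 1). For `s^* < a ≤ b ≤ T` and
every `δ > 0` there is `ε > 0` such that for all `z ∈ [a,b]` and every Borel
probability measure `μ` supported in `[0,T]`, with `y ↦ ln|z−y|` `μ`-integrable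
and with bounded-Lipschitz distance at most `ε` from `σ_{β,γ}`, one has
`∫ ln|z−y| dμ ≤ ∫ ln(z−t) dσ_{β,γ} + δ`. -/
theorem log_potential_uniformly_continuous
    (β γ : ℝ) (hβ : β = 1 ∨ β = 2) (hγ : γ ∈ Set.Ioc (0 : ℝ) 1)
    (a b T : ℝ) (ha : β * (Real.sqrt γ + 1) ^ 2 < a) (hab : a ≤ b) (hbT : b ≤ T) :
    ∀ δ : ℝ, 0 < δ → ∃ ε : ℝ, 0 < ε ∧
      ∀ z ∈ Set.Icc a b, ∀ μ : Measure ℝ, IsProbabilityMeasure μ →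
        μ (Set.Icc (0 : ℝ) T)ᶜ = 0 →
        Integrable (fun y => Real.log |z - y|) μ →
        (∀ (h : ℝ → ℝ) (c : ℝ) (K : NNReal), (∀ y, |h y| ≤ c) → LipschitzWith K h →
          c + (K : ℝ) ≤ 1 → |∫ y, h y ∂μ - ∫ y, h y ∂(mpLaw β γ)| ≤ ε) →
        ∫ y, Real.log |z - y| ∂μ ≤ (∫ t, Real.log (z - t) ∂(mpLaw β γ)) + δ := by
  intro δ hδ
  have hβ0 : 0 < β := by rcases hβ with h | h <;> rw [h] <;> norm_num
  have hγ0 : 0 < γ := hγ.1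
  have hs2pos : 0 < β * (Real.sqrt γ + 1) ^ 2 := by positivity
  have hs1nonneg : 0 ≤ β * (Real.sqrt γ - 1) ^ 2 := by positivity
  have hTpos : 0 < T := lt_of_lt_of_le (lt_of_lt_of_le hs2pos ha.le) (hab.trans hbT)
  set η : ℝ := min (a - β * (Real.sqrt γ + 1) ^ 2) 1 with hηdef
  have hη0 : 0 < η := lt_min (by linarith) one_pos
  have hη1 : η ≤ 1 := min_le_right _ _
  set L : ℝ := -Real.log η with hLdef
  have hL0 : 0 ≤ L := neg_nonneg.mpr (Real.log_nonpos hη0.le hη1)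
  have hlogη : Real.log η = -L := by rw [hLdef]; ring
  have hlogT : 0 < Real.log (T + 1) := Real.log_pos (by linarith)
  set M : ℝ := 2 * L + Real.log (T + 1) with hMdef
  have hM : 0 < M := by positivity
  set Kr : ℝ := (1 + L) * η⁻¹ with hKrdef
  have hKr0 : 0 ≤ Kr := by positivity
  set C : ℝ := M + Kr with hCdef
  have hC : 0 < C := by positivity
  refine ⟨δ / C, by positivity, ?_⟩
  intro z hz μ hμprob hμsupp hint hBL
  have hza : a ≤ z := hz.1
  have hzb : z ≤ b := hz.2
  set w : ℝ → ℝ := fun y => min (max y 0) T with hwdef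
  set g : ℝ → ℝ := fun y => Real.log (max |z - w y| η) with hgdef
  set φ : ℝ → ℝ := fun y => max (1 - |y - z| * η⁻¹) 0 with hφdef
  set G : ℝ → ℝ := fun y => g y + L * φ y with hGdef
  have hw_bounds : ∀ y, 0 ≤ w y ∧ w y ≤ T := fun y =>
    ⟨le_min (le_max_right y 0) hTpos.le, min_le_right _ _⟩
  have lipw : LipschitzWith 1 w := by
    rw [hwdef]
    exact (LipschitzWith.id.max_const 0).min_const T
  have hw_lip : ∀ x y, |w x - w y| ≤ |x - y| := by
    intro x y
    have h1 := lipw.dist_le_mul x y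
    rwa [Real.dist_eq, Real.dist_eq, NNReal.coe_one, one_mul] at h1
  have hg_lip : ∀ x y, |g x - g y| ≤ η⁻¹ * |x - y| := by
    intro x y
    have h1 : |g x - g y| ≤ η⁻¹ * |(|z - w x|) - (|z - w y|)| := by
      apply (abs_log_sub_log_le hη0 (le_max_right _ _) (le_max_right _ _)).trans
      exact mul_le_mul_of_nonneg_left (abs_max_sub_max_le_abs _ _ _) (by positivity)
    have h2 : |(|z - w x|) - (|z - w y|)| ≤ |w x - w y| := by
      calc |(|z - w x|) - (|z - w y|)| ≤ |(z - w x) - (z - w y)| :=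
            abs_abs_sub_abs_le_abs_sub _ _
        _ = |w y - w x| := by ring_nf
        _ = |w x - w y| := abs_sub_comm _ _
    calc |g x - g y| ≤ η⁻¹ * |(|z - w x|) - (|z - w y|)| := h1
      _ ≤ η⁻¹ * |w x - w y| := mul_le_mul_of_nonneg_left h2 (by positivity)
      _ ≤ η⁻¹ * |x - y| := mul_le_mul_of_nonneg_left (hw_lip x y) (by positivity)
  have hφ_lip : ∀ x y, |φ x - φ y| ≤ η⁻¹ * |x - y| := by
    intro x y
    calc |φ x - φ y| ≤ |(1 - |x - z| * η⁻¹) - (1 - |y - z| * η⁻¹)| :=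
          abs_max_sub_max_le_abs _ _ 0
      _ = |(|y - z| - |x - z|)| * η⁻¹ := by
          rw [show (1 - |x - z| * η⁻¹) - (1 - |y - z| * η⁻¹)
              = (|y - z| - |x - z|) * η⁻¹ by ring,
            abs_mul, abs_of_nonneg (by positivity : (0:ℝ) ≤ η⁻¹)]
      _ ≤ |y - x| * η⁻¹ := by
          apply mul_le_mul_of_nonneg_right _ (by positivity)
          calc |(|y - z| - |x - z|)| ≤ |(y - z) - (x - z)| := abs_abs_sub_abs_le_abs_sub _ _
            _ = |y - x| := by ring_nf
      _ = η⁻¹ * |x - y| := by rw [abs_sub_comm]; ring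
  have hG_lip : LipschitzWith (Real.toNNReal Kr) G := by
    apply LipschitzWith.of_dist_le_mul
    intro x y
    rw [Real.dist_eq, Real.dist_eq, Real.coe_toNNReal _ hKr0]
    have h1 : G x - G y = (g x - g y) + L * (φ x - φ y) := by
      simp only [hGdef]; ring
    calc |G x - G y| ≤ |g x - g y| + |L * (φ x - φ y)| := h1 ▸ abs_add_le _ _
      _ = |g x - g y| + L * |φ x - φ y| := by rw [abs_mul, abs_of_nonneg hL0]
      _ ≤ η⁻¹ * |x - y| + L * (η⁻¹ * |x - y|) :=
          add_le_add (hg_lip x y) (mul_le_mul_of_nonneg_left (hφ_lip x y) hL0)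
      _ = Kr * |x - y| := by rw [hKrdef]; ring
  have hφ_bounds : ∀ y, 0 ≤ φ y ∧ φ y ≤ 1 := by
    intro y
    refine ⟨le_max_right _ _, max_le ?_ one_pos.le⟩
    have h0 : 0 ≤ |y - z| * η⁻¹ := by positivity
    linarith
  have hg_bounds : ∀ y, Real.log η ≤ g y ∧ g y ≤ Real.log (T + 1) := by
    intro y
    constructor
    · exact Real.log_le_log hη0 (le_max_right _ _)
    · apply Real.log_le_log (lt_of_lt_of_le hη0 (le_max_right _ _))
      apply max_le _ (by linarith)
      rw [abs_sub_le_iff]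
      have hwb := hw_bounds y
      constructor <;> linarith [hwb.1, hwb.2, hs2pos]
  have hG_bd : ∀ y, |G y| ≤ M := by
    intro y
    have h1 := hg_bounds y
    have h2 := hφ_bounds y
    have hLφ : L * φ y ≤ L := by nlinarith
    have hLφ0 : 0 ≤ L * φ y := mul_nonneg hL0 h2.1
    have hGy : G y = g y + L * φ y := rfl
    rw [abs_le, hGy]
    constructor <;> [linarith [hlogη ▸ h1.1]; linarith [h1.2]]
  have hG_int : Integrable G μ := by
    refine (integrable_const M).mono' hG_lip.continuous.aestronglyMeasurable ?_
    filter_upwards with y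
    simpa [Real.norm_eq_abs] using hG_bd y
  have hμae : ∀ᵐ y ∂μ, y ∈ Set.Icc (0 : ℝ) T := by
    rw [ae_iff]
    exact hμsupp
  have hmono : ∀ᵐ y ∂μ, Real.log |z - y| ≤ G y := by
    filter_upwards [hμae] with y hy
    have hwy : w y = y := by
      simp only [hwdef]
      rw [max_eq_left hy.1, min_eq_left hy.2]
    by_cases hyz : y = z
    · subst hyz
      have hGy : G y = 0 := by
        simp only [hGdef, hgdef, hφdef, hwy]
        rw [sub_self, abs_zero, zero_mul, sub_zero, max_eq_right hη0.le,
          max_eq_left zero_le_one, mul_one, hlogη]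
        ring
      rw [hGy, sub_self, abs_zero, Real.log_zero]
    · have habs : 0 < |z - y| := abs_pos.mpr (sub_ne_zero.mpr (fun h => hyz h.symm))
      have h1 : Real.log |z - y| ≤ g y := by
        simp only [hgdef, hwy]
        exact Real.log_le_log habs (le_max_left _ _)
      have h2 : 0 ≤ L * φ y := mul_nonneg hL0 (hφ_bounds y).1
      have hGy : G y = g y + L * φ y := rfl
      rw [hGy]
      linarith
  have hσae : ∀ᵐ y ∂(mpLaw β γ), G y = Real.log (z - y) := by
    filter_upwards [mpLaw_ae_mem β γ] with y hy
    have hy1 : 0 ≤ y := le_trans hs1nonneg hy.1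
    have hy2 : y ≤ T := le_trans hy.2 (by linarith)
    have hwy : w y = y := by
      simp only [hwdef]
      rw [max_eq_left hy1, min_eq_left hy2]
    have hzy : η ≤ z - y := by
      have hmin : η ≤ a - β * (Real.sqrt γ + 1) ^ 2 := min_le_left _ _
      have := hy.2
      linarith
    have hzy0 : 0 < z - y := lt_of_lt_of_le hη0 hzy
    have habs : |z - y| = z - y := abs_of_pos hzy0
    have hφy : φ y = 0 := by
      simp only [hφdef]
      apply max_eq_right
      have h1 : (1 : ℝ) ≤ |y - z| * η⁻¹ := by
        rw [abs_sub_comm, habs]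
        calc (1 : ℝ) = η * η⁻¹ := (mul_inv_cancel₀ hη0.ne').symm
          _ ≤ (z - y) * η⁻¹ := mul_le_mul_of_nonneg_right hzy (by positivity)
      linarith
    have hGy : G y = g y + L * φ y := rfl
    rw [hGy, hφy, mul_zero, add_zero]
    simp only [hgdef, hwy, habs]
    rw [max_eq_left hzy]
  have hσeq : ∫ y, G y ∂(mpLaw β γ) = ∫ t, Real.log (z - t) ∂(mpLaw β γ) :=
    integral_congr_ae hσae
  have hh_lip : LipschitzWith (Real.toNNReal (Kr / C)) (fun y => G y / C) := by
    apply LipschitzWith.of_dist_le_mul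
    intro x y
    rw [Real.dist_eq, Real.dist_eq, Real.coe_toNNReal _ (by positivity)]
    have h1 := hG_lip.dist_le_mul x y
    rw [Real.dist_eq, Real.dist_eq, Real.coe_toNNReal _ hKr0] at h1
    calc |G x / C - G y / C| = |G x - G y| / C := by
          rw [← sub_div, abs_div, abs_of_pos hC]
      _ ≤ Kr * |x - y| / C := by gcongr
      _ = Kr / C * |x - y| := by ring
  have hh_bd : ∀ y, |G y / C| ≤ M / C := by
    intro y
    rw [abs_div, abs_of_pos hC]
    gcongr
    exact hG_bd y
  have hcK : M / C + ((Real.toNNReal (Kr / C) : ℝ)) ≤ 1 := by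
    rw [Real.coe_toNNReal _ (by positivity), ← add_div, ← hCdef]
    exact le_of_eq (div_self hC.ne')
  have hBL' := hBL (fun y => G y / C) (M / C) (Real.toNNReal (Kr / C)) hh_bd hh_lip hcK
  rw [integral_div, integral_div] at hBL'
  have habs_le := (abs_le.mp hBL').2
  have hGle : ∫ y, G y ∂μ ≤ ∫ y, G y ∂(mpLaw β γ) + δ := by
    have h2 : (∫ y, G y ∂μ - ∫ y, G y ∂(mpLaw β γ)) / C ≤ δ / C := by
      rw [sub_div]; exact habs_le
    have h3 := mul_le_mul_of_nonneg_right h2 hC.le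
    rw [div_mul_cancel₀ _ hC.ne', div_mul_cancel₀ _ hC.ne'] at h3
    linarith
  have hmain : ∫ y, Real.log |z - y| ∂μ ≤ ∫ y, G y ∂μ :=
    integral_mono_ae hint hG_int hmono
  linarith [hGle, hmain, hσeq]
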